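/- Let (Ā, b̄, λ̄) ∈ ℝ^{m×n} × ℝ^m × ℝ₊₊, and let x̄ be the unique solution of the SR-LASSO with data (Ā, b̄, λ̄) such that, with I := supp(x̄), Āx̄ ≠ b̄ and ‖Ā_{I^C}ᵀ(b̄ − Āx̄)‖_∞ < λ̄‖Āx̄ − b̄‖₂. Suppose (A_k, b_k, λ_k) → (Ā, b̄, λ̄) with λ_k > 0, that x_k is a solution of the SR-LASSO with data (A_k, b_k, λ_k) for each k, and that x_k → x̄. Then supp(x_k) = supp(x̄) for all sufficiently large k. -/

import Mathlib

open Matrix Filter Topology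
open scoped BigOperators Classical

noncomputable def l2 {k : ℕ} (x : Fin k → ℝ) : ℝ := Real.sqrt (∑ i, (x i) ^ 2)

noncomputable def l1 {k : ℕ} (x : Fin k → ℝ) : ℝ := ∑ i, |x i|

noncomputable def linf {k : ℕ} (x : Fin k → ℝ) : ℝ := sSup (Set.range fun i => |x i|)

noncomputable def dotp {k : ℕ} (x y : Fin k → ℝ) : ℝ := ∑ i, x i * y i

noncomputable def pinv {m s : ℕ} (M : Matrix (Fin m) (Fin s) ℝ) :
    Matrix (Fin s) (Fin m) ℝ := (Mᵀ * M)⁻¹ * Mᵀ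

/-- The SR-LASSO objective f_{A,b,λ}(x) := ‖Ax − b‖₂ + λ‖x‖₁. -/
noncomputable def srObj {m n : ℕ} (A : Matrix (Fin m) (Fin n) ℝ) (b : Fin m → ℝ)
    (lam : ℝ) (x : Fin n → ℝ) : ℝ := l2 (A.mulVec x - b) + lam * l1 x

/-- x is a solution of the SR-LASSO with data (A, b, λ). -/
def IsSol {m n : ℕ} (A : Matrix (Fin m) (Fin n) ℝ) (b : Fin m → ℝ) (lam : ℝ)
    (x : Fin n → ℝ) : Prop := ∀ w : Fin n → ℝ, srObj A b lam x ≤ srObj A b lam w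

/-- y is feasible for the SR-LASSO dual: ‖Aᵀy‖_∞ ≤ λ and ‖y‖₂ ≤ 1. -/
noncomputable def DualFeas {m n : ℕ} (A : Matrix (Fin m) (Fin n) ℝ) (lam : ℝ)
    (y : Fin m → ℝ) : Prop := linf (Aᵀ.mulVec y) ≤ lam ∧ l2 y ≤ 1

/-- y is a solution of the SR-LASSO dual: it is feasible and maximizes ⟨b, ·⟩
over the feasible set. -/
noncomputable def IsDualSol {m n : ℕ} (A : Matrix (Fin m) (Fin n) ℝ) (b : Fin m → ℝ)
    (lam : ℝ) (y : Fin m → ℝ) : Prop :=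
  DualFeas A lam y ∧ ∀ y' : Fin m → ℝ, DualFeas A lam y' → dotp b y' ≤ dotp b y

lemma l2_pos {k : ℕ} {v : Fin k → ℝ} (hv : v ≠ 0) : 0 < l2 v := by
  obtain ⟨j, hj⟩ := Function.ne_iff.mp hv
  apply Real.sqrt_pos.mpr
  exact Finset.sum_pos' (fun i _ => sq_nonneg _) ⟨j, Finset.mem_univ j, pow_two_pos_of_ne_zero hj⟩

lemma l2_cont {k : ℕ} : Continuous (l2 (k := k)) := by
  unfold l2
  exact Real.continuous_sqrt.comp (by continuity)

lemma stationarity {m n : ℕ} {A : Matrix (Fin m) (Fin n) ℝ} {b : Fin m → ℝ} {lam : ℝ}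
    (hlam : 0 ≤ lam) {x : Fin n → ℝ} (hx : IsSol A b lam x)
    (hr : A.mulVec x - b ≠ 0) (i : Fin n) (hi : x i ≠ 0) :
    |Aᵀ.mulVec (b - A.mulVec x) i| = lam * l2 (A.mulVec x - b) := by
  set r0 : Fin m → ℝ := A.mulVec x - b with hr0
  set c : Fin m → ℝ := fun j => A j i with hc
  set t0 : ℝ := x i with ht0
  -- objective along coordinate i
  have key : ∀ t : ℝ, srObj A b lam (Function.update x i t)
      = Real.sqrt (∑ j, (r0 j + (t - t0) * c j) ^ 2)
        + lam * (|t| + (l1 x - |t0|)) := by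
    intro t
    have hmv : ∀ j, A.mulVec (Function.update x i t) j - b j = r0 j + (t - t0) * c j := by
      intro j
      have : A.mulVec (Function.update x i t) j = A.mulVec x j + (t - t0) * A j i := by
        simp only [Matrix.mulVec, dotProduct]
        rw [← Finset.add_sum_erase _ _ (Finset.mem_univ i),
            ← Finset.add_sum_erase _ (fun l => A j l * x l) (Finset.mem_univ i)]
        have : ∑ l ∈ Finset.univ.erase i, A j l * Function.update x i t l
            = ∑ l ∈ Finset.univ.erase i, A j l * x l := by
          apply Finset.sum_congr rfl
          intro l hl
          rw [Function.update_of_ne (Finset.ne_of_mem_erase hl)]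
        rw [this, Function.update_self]
        ring
      simp [hr0, this]
      ring
    have hl1 : l1 (Function.update x i t) = |t| + (l1 x - |t0|) := by
      unfold l1
      rw [← Finset.add_sum_erase _ (fun l => |Function.update x i t l|) (Finset.mem_univ i),
          ← Finset.add_sum_erase _ (fun l => |x l|) (Finset.mem_univ i)]
      have : ∑ l ∈ Finset.univ.erase i, |Function.update x i t l|
          = ∑ l ∈ Finset.univ.erase i, |x l| := by
        apply Finset.sum_congr rfl
        intro l hl
        rw [Function.update_of_ne (Finset.ne_of_mem_erase hl)]
      rw [this, Function.update_self, ht0]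
      ring
    unfold srObj l2
    rw [hl1]
    congr 2
    apply Finset.sum_congr rfl
    intro j _
    rw [show (A.mulVec (Function.update x i t) - b) j
        = A.mulVec (Function.update x i t) j - b j from rfl, hmv j]
  set g : ℝ → ℝ := fun t => Real.sqrt (∑ j, (r0 j + (t - t0) * c j) ^ 2)
      + lam * (|t| + (l1 x - |t0|)) with hg
  have hmin : IsLocalMin g t0 := by
    apply IsMinOn.isLocalMin
    · intro t _
      have h1 := hx (Function.update x i t)
      rw [key t] at h1
      have h2 : srObj A b lam x = g t0 := by
        have := key t0
        rw [ht0, Function.update_eq_self] at this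
        rw [this]
      rw [← h2]
      exact h1
    · exact Filter.univ_mem
  -- derivative
  have hq0 : 0 < ∑ j, (r0 j) ^ 2 := by
    obtain ⟨j, hj⟩ := Function.ne_iff.mp hr
    exact Finset.sum_pos' (fun l _ => sq_nonneg _) ⟨j, Finset.mem_univ j, pow_two_pos_of_ne_zero hj⟩
  have hq : HasDerivAt (fun t => ∑ j, (r0 j + (t - t0) * c j) ^ 2)
      (∑ j, 2 * r0 j * c j) t0 := by
    apply HasDerivAt.fun_sum
    intro j _
    have h1 : HasDerivAt (fun t => r0 j + (t - t0) * c j) (c j) t0 := by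
      simpa using (((hasDerivAt_id t0).sub_const t0).mul_const (c j)).const_add (r0 j)
    have := h1.fun_pow 2
    simpa using this
  have hq0' : (∑ j, (r0 j + (t0 - t0) * c j) ^ 2) ≠ 0 := by
    simpa using ne_of_gt hq0
  have hsqrt : HasDerivAt (fun t => Real.sqrt (∑ j, (r0 j + (t - t0) * c j) ^ 2))
      (1 / (2 * Real.sqrt (∑ j, (r0 j) ^ 2)) * (∑ j, 2 * r0 j * c j)) t0 := by
    have := (Real.hasDerivAt_sqrt hq0').comp t0 hq
    simpa [Function.comp_def] using this
  have habs : HasDerivAt (fun t : ℝ => lam * (|t| + (l1 x - |t0|)))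
      (lam * (SignType.sign t0 : ℝ)) t0 := by
    have h1 : HasDerivAt (fun t : ℝ => |t|) ((SignType.sign t0 : ℝ)) t0 := hasDerivAt_abs hi
    simpa using ((h1.add_const (l1 x - |t0|)).const_mul lam)
  have hD : HasDerivAt g
      (1 / (2 * Real.sqrt (∑ j, (r0 j) ^ 2)) * (∑ j, 2 * r0 j * c j)
        + lam * (SignType.sign t0 : ℝ)) t0 := hsqrt.add habs
  have hzero := hmin.hasDerivAt_eq_zero hD
  -- rearrange
  set S : ℝ := Real.sqrt (∑ j, (r0 j) ^ 2) with hS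
  have hSpos : 0 < S := Real.sqrt_pos.mpr hq0
  have hsum : (∑ j, 2 * r0 j * c j) = 2 * ∑ j, r0 j * c j := by
    rw [Finset.mul_sum]
    apply Finset.sum_congr rfl
    intros; ring
  rw [hsum] at hzero
  have hmain : (∑ j, r0 j * c j) = - (lam * (SignType.sign t0 : ℝ)) * S := by
    field_simp at hzero
    nlinarith [hzero]
  have hAt : Aᵀ.mulVec (b - A.mulVec x) i = - ∑ j, r0 j * c j := by
    simp only [Matrix.mulVec, dotProduct, Matrix.transpose_apply, hr0, hc]
    rw [← Finset.sum_neg_distrib]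
    apply Finset.sum_congr rfl
    intro j _
    simp [Pi.sub_apply]
    ring
  have hsign : |(SignType.sign t0 : ℝ)| = 1 := by
    rcases lt_or_gt_of_ne hi with h | h
    · rw [show SignType.sign t0 = -1 from sign_neg h]; norm_num
    · rw [show SignType.sign t0 = 1 from sign_pos h]; norm_num
  rw [hAt, hmain]
  have : l2 (A.mulVec x - b) = S := rfl
  rw [this]
  rw [abs_neg, abs_mul, abs_neg, abs_mul, hsign, abs_of_nonneg hlam, abs_of_pos hSpos]
  ring

/-- constancy of support: if x̄ is the unique solution for
(Ā, b̄, λ̄) with Āx̄ ≠ b̄ and ‖Ā_{I^C}ᵀ(b̄ − Āx̄)‖_∞ < λ̄‖Āx̄ − b̄‖₂ where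
I := supp(x̄), and (Aₖ, bₖ, λₖ) → (Ā, b̄, λ̄) with solutions xₖ → x̄, then
supp(xₖ) = supp(x̄) for all large k. -/
theorem stmt_16 {m n : ℕ} (Abar : Matrix (Fin m) (Fin n) ℝ) (bbar : Fin m → ℝ)
    (lambar : ℝ) (hlam : 0 < lambar) (xbar : Fin n → ℝ)
    (hsol : IsSol Abar bbar lambar xbar)
    (huniq : ∀ x : Fin n → ℝ, IsSol Abar bbar lambar x → x = xbar)
    (hres : Abar.mulVec xbar ≠ bbar)
    (hii : ∀ i, xbar i = 0 →
      |Abarᵀ.mulVec (bbar - Abar.mulVec xbar) i|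
        < lambar * l2 (Abar.mulVec xbar - bbar))
    (Ak : ℕ → Matrix (Fin m) (Fin n) ℝ) (bk : ℕ → Fin m → ℝ) (lamk : ℕ → ℝ)
    (hlamk : ∀ k, 0 < lamk k)
    (hAk : Filter.Tendsto Ak Filter.atTop (nhds Abar))
    (hbk : Filter.Tendsto bk Filter.atTop (nhds bbar))
    (hlk : Filter.Tendsto lamk Filter.atTop (nhds lambar))
    (xk : ℕ → Fin n → ℝ)
    (hxk : ∀ k, IsSol (Ak k) (bk k) (lamk k) (xk k))
    (hxlim : Filter.Tendsto xk Filter.atTop (nhds xbar)) :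
    ∀ᶠ k in Filter.atTop,
      {i : Fin n | xk k i ≠ 0} = {i : Fin n | xbar i ≠ 0} := by
  have hxkc : ∀ i, Tendsto (fun k => xk k i) atTop (nhds (xbar i)) := fun i =>
    ((continuous_apply i).continuousAt.tendsto).comp hxlim
  have hAc : ∀ j l, Tendsto (fun k => Ak k j l) atTop (nhds (Abar j l)) := fun j l =>
    tendsto_pi_nhds.mp (tendsto_pi_nhds.mp hAk j) l
  have hbc : ∀ j, Tendsto (fun k => bk k j) atTop (nhds (bbar j)) := fun j =>
    ((continuous_apply j).continuousAt.tendsto).comp hbk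
  have hresc : Tendsto (fun k => (Ak k).mulVec (xk k) - bk k) atTop
      (nhds (Abar.mulVec xbar - bbar)) := by
    rw [tendsto_pi_nhds]
    intro j
    have : Tendsto (fun k => (∑ l, Ak k j l * xk k l) - bk k j) atTop
        (nhds ((∑ l, Abar j l * xbar l) - bbar j)) :=
      (tendsto_finset_sum _ (fun l _ => (hAc j l).mul (hxkc l))).sub (hbc j)
    simpa [Matrix.mulVec, dotProduct] using this
  have hl2c : Tendsto (fun k => l2 ((Ak k).mulVec (xk k) - bk k)) atTop
      (nhds (l2 (Abar.mulVec xbar - bbar))) := (l2_cont.continuousAt.tendsto).comp hresc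
  have hrbar : Abar.mulVec xbar - bbar ≠ 0 := sub_ne_zero.mpr hres
  have hE2 : ∀ᶠ k in atTop, (Ak k).mulVec (xk k) - bk k ≠ 0 := by
    have h := hl2c.eventually (eventually_gt_nhds (l2_pos hrbar))
    filter_upwards [h] with k hk
    intro h0
    rw [h0] at hk
    simp [l2] at hk
  have hE1 : ∀ᶠ k in atTop, ∀ i, xbar i ≠ 0 → xk k i ≠ 0 := by
    rw [eventually_all]
    intro i
    by_cases hb : xbar i = 0
    · filter_upwards with k hk; exact absurd hb hk
    · filter_upwards [(hxkc i).eventually_ne hb] with k hk _; exact hk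
  have hE3 : ∀ᶠ k in atTop, ∀ i, xbar i = 0 →
      |(Ak k)ᵀ.mulVec (bk k - (Ak k).mulVec (xk k)) i|
        < lamk k * l2 ((Ak k).mulVec (xk k) - bk k) := by
    rw [eventually_all]
    intro i
    by_cases hb : xbar i = 0
    · have hcoord : ∀ j, Tendsto (fun k => (bk k - (Ak k).mulVec (xk k)) j) atTop
          (nhds ((bbar - Abar.mulVec xbar) j)) := by
        intro j
        refine tendsto_pi_nhds.mp ?_ j
        simpa [neg_sub] using hresc.neg
      have hLt : Tendsto (fun k => |(Ak k)ᵀ.mulVec (bk k - (Ak k).mulVec (xk k)) i|) atTop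
          (nhds |Abarᵀ.mulVec (bbar - Abar.mulVec xbar) i|) := by
        apply Filter.Tendsto.abs
        have := tendsto_finset_sum Finset.univ
          (fun j (_ : j ∈ Finset.univ) => (hAc j i).mul (hcoord j))
        simpa [Matrix.mulVec, dotProduct, Matrix.transpose_apply] using this
      have hRt : Tendsto (fun k => lamk k * l2 ((Ak k).mulVec (xk k) - bk k)) atTop
          (nhds (lambar * l2 (Abar.mulVec xbar - bbar))) := hlk.mul hl2c
      filter_upwards [hLt.eventually_lt hRt (hii i hb)] with k hk _
      exact hk
    · filter_upwards with k hk; exact absurd hk hb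
  filter_upwards [hE1, hE2, hE3] with k h1 h2 h3
  ext i
  simp only [Set.mem_setOf_eq]
  constructor
  · intro hne
    by_contra hbi
    have hbz : xbar i = 0 := by simpa using hbi
    have heq := stationarity (hlamk k).le (hxk k) h2 i hne
    have hlt := h3 i hbz
    rw [heq] at hlt
    exact lt_irrefl _ hlt
  · exact h1 i
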